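/- Let μ and ν be Borel probability measures on ℝⁿ with finite first moments, and let x, x' ∼ μ and y, y' ∼ ν be independent. Then the energy distance 2E[‖x−y‖] − E[‖x−x'‖] − E[‖y−y'‖] is nonnegative. -/

import Mathlib

open MeasureTheory

open ENNReal
open scoped RealInnerProductSpace

namespace EnergyAux

abbrev Eu (n : ℕ) := EuclideanSpace ℝ (Fin n)

variable {n : ℕ}

lemma meas_inner (g : Eu n) : Measurable fun x : Eu n => ⟪g, x⟫ :=
  (continuous_const.inner continuous_id).measurable

lemma lint_ite {α : Type*} [MeasurableSpace α] (μ : Measure α) {p : α → Prop}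
    [DecidablePred p] (hp : MeasurableSet {x | p x}) :
    ∫⁻ x, (if p x then (1 : ℝ≥0∞) else 0) ∂μ = μ {x | p x} := by
  rw [← lintegral_indicator_one hp]
  refine lintegral_congr fun x => ?_
  by_cases h : p x <;> simp [Set.indicator_apply, h]


lemma key1 (a b : ℝ) :
    (∫⁻ t : ℝ, ((if a ≤ t then 1 else 0) * (if t < b then 1 else 0)
      + (if b ≤ t then 1 else 0) * (if t < a then 1 else 0) : ℝ≥0∞))
      = ENNReal.ofReal |a - b| := by
  have h : ∀ t : ℝ, ((if a ≤ t then 1 else 0) * (if t < b then 1 else 0)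
      + (if b ≤ t then 1 else 0) * (if t < a then 1 else 0) : ℝ≥0∞)
      = (Set.Ico a b).indicator 1 t + (Set.Ico b a).indicator 1 t := by
    intro t
    simp only [Set.indicator_apply, Set.mem_Ico, Pi.one_apply]
    by_cases h1 : a ≤ t <;> by_cases h2 : t < b <;> by_cases h3 : b ≤ t <;>
      by_cases h4 : t < a <;> simp [h1, h2, h3, h4]
  simp only [h]
  rw [lintegral_add_left (measurable_one.indicator measurableSet_Ico),
    lintegral_indicator_one measurableSet_Ico, lintegral_indicator_one measurableSet_Ico,
    Real.volume_Ico, Real.volume_Ico]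
  rcases le_total a b with hab | hab
  · rw [ENNReal.ofReal_of_nonpos (show a - b ≤ 0 by linarith), add_zero,
      abs_of_nonpos (show a - b ≤ 0 by linarith), neg_sub]
  · rw [ENNReal.ofReal_of_nonpos (show b - a ≤ 0 by linarith), zero_add,
      abs_of_nonneg (show 0 ≤ a - b by linarith)]

lemma key2 (ρ σ : Measure (Eu n))
    [IsProbabilityMeasure ρ] [IsProbabilityMeasure σ] (g : Eu n) :
    ∫⁻ x, ∫⁻ y, ENNReal.ofReal |⟪g, x⟫ - ⟪g, y⟫| ∂σ ∂ρ
      = ∫⁻ t : ℝ, (ρ {x | ⟪g, x⟫ ≤ t} * σ {y | t < ⟪g, y⟫}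
          + σ {y | ⟪g, y⟫ ≤ t} * ρ {x | t < ⟪g, x⟫}) := by
  have mg := meas_inner g
  have hm1 : Measurable fun z : Eu n × Eu n => ENNReal.ofReal |⟪g, z.1⟫ - ⟪g, z.2⟫| := by
    apply Measurable.ennreal_ofReal
    apply Measurable.abs
    exact (mg.comp measurable_fst).sub (mg.comp measurable_snd)
  have hH : Measurable fun p : (Eu n × Eu n) × ℝ =>
      ((if ⟪g, p.1.1⟫ ≤ p.2 then 1 else 0) * (if p.2 < ⟪g, p.1.2⟫ then 1 else 0)
        + (if ⟪g, p.1.2⟫ ≤ p.2 then 1 else 0) * (if p.2 < ⟪g, p.1.1⟫ then 1 else 0) : ℝ≥0∞) := by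
    have m1 : Measurable fun p : (Eu n × Eu n) × ℝ => ⟪g, p.1.1⟫ :=
      mg.comp (measurable_fst.fst)
    have m2 : Measurable fun p : (Eu n × Eu n) × ℝ => ⟪g, p.1.2⟫ :=
      mg.comp (measurable_fst.snd)
    exact ((Measurable.ite (measurableSet_le m1 measurable_snd) measurable_const
        measurable_const).mul (Measurable.ite (measurableSet_lt measurable_snd m2)
        measurable_const measurable_const)).add
      ((Measurable.ite (measurableSet_le m2 measurable_snd) measurable_const
        measurable_const).mul (Measurable.ite (measurableSet_lt measurable_snd m1)
        measurable_const measurable_const))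
  calc ∫⁻ x, ∫⁻ y, ENNReal.ofReal |⟪g, x⟫ - ⟪g, y⟫| ∂σ ∂ρ
      = ∫⁻ z : Eu n × Eu n, ENNReal.ofReal |⟪g, z.1⟫ - ⟪g, z.2⟫| ∂ρ.prod σ :=
        (lintegral_prod _ hm1.aemeasurable).symm
    _ = ∫⁻ z : Eu n × Eu n, (∫⁻ t : ℝ,
          ((if ⟪g, z.1⟫ ≤ t then 1 else 0) * (if t < ⟪g, z.2⟫ then 1 else 0)
            + (if ⟪g, z.2⟫ ≤ t then 1 else 0) * (if t < ⟪g, z.1⟫ then 1 else 0) : ℝ≥0∞))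
          ∂ρ.prod σ := lintegral_congr fun z => (key1 _ _).symm
    _ = ∫⁻ t : ℝ, ∫⁻ z : Eu n × Eu n,
          ((if ⟪g, z.1⟫ ≤ t then 1 else 0) * (if t < ⟪g, z.2⟫ then 1 else 0)
            + (if ⟪g, z.2⟫ ≤ t then 1 else 0) * (if t < ⟪g, z.1⟫ then 1 else 0) : ℝ≥0∞)
          ∂ρ.prod σ := lintegral_lintegral_swap hH.aemeasurable
    _ = ∫⁻ t : ℝ, (ρ {x | ⟪g, x⟫ ≤ t} * σ {y | t < ⟪g, y⟫}
          + σ {y | ⟪g, y⟫ ≤ t} * ρ {x | t < ⟪g, x⟫}) := by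
        refine lintegral_congr fun t => ?_
        have hsle : MeasurableSet {x : Eu n | ⟪g, x⟫ ≤ t} :=
          measurableSet_le mg measurable_const
        have hslt : MeasurableSet {x : Eu n | t < ⟪g, x⟫} :=
          measurableSet_lt measurable_const mg
        rw [lintegral_prod (fun z : Eu n × Eu n =>
          ((if ⟪g, z.1⟫ ≤ t then 1 else 0) * (if t < ⟪g, z.2⟫ then 1 else 0)
            + (if ⟪g, z.2⟫ ≤ t then 1 else 0) * (if t < ⟪g, z.1⟫ then 1 else 0) : ℝ≥0∞))
          (hH.comp (measurable_id.prodMk measurable_const)).aemeasurable]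
        have hyi : ∀ x : Eu n, ∫⁻ y,
            ((if ⟪g, x⟫ ≤ t then 1 else 0) * (if t < ⟪g, y⟫ then 1 else 0)
              + (if ⟪g, y⟫ ≤ t then 1 else 0) * (if t < ⟪g, x⟫ then 1 else 0) : ℝ≥0∞) ∂σ
            = (if ⟪g, x⟫ ≤ t then 1 else 0) * σ {y | t < ⟪g, y⟫}
              + σ {y | ⟪g, y⟫ ≤ t} * (if t < ⟪g, x⟫ then 1 else 0) := by
          intro x
          rw [lintegral_add_left ((Measurable.ite hslt measurable_const
                measurable_const).const_mul _),
            lintegral_const_mul' _ _ (by split_ifs <;> simp),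
            lintegral_mul_const' _ _ (by split_ifs <;> simp),
            lint_ite σ hslt, lint_ite σ hsle]
        simp_rw [hyi]
        rw [lintegral_add_left ((Measurable.ite hsle measurable_const
              measurable_const).mul_const _),
          lintegral_mul_const' _ _ (measure_ne_top σ _),
          lintegral_const_mul' _ _ (measure_ne_top σ _),
          lint_ite ρ hsle, lint_ite ρ hslt]


/-- The Gaussian-type weight. -/
noncomputable def wt (g : Eu n) : ℝ≥0∞ := ENNReal.ofReal (Real.exp (-‖g‖ ^ 2))

lemma meas_phi_integrand (v : Eu n) :
    Measurable fun g : Eu n => ENNReal.ofReal |⟪g, v⟫| * wt g := by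
  refine Measurable.mul (f := fun g : Eu n => ENNReal.ofReal |⟪g, v⟫|) (g := wt) ?_ ?_
  · exact ((continuous_id.inner continuous_const).abs.measurable).ennreal_ofReal
  · exact ((continuous_norm.pow 2).neg.rexp.measurable).ennreal_ofReal

noncomputable def phi (v : Eu n) : ℝ≥0∞ := ∫⁻ g : Eu n, ENNReal.ofReal |⟪g, v⟫| * wt g

lemma phi_eq (hn : 0 < n) (v : Eu n) :
    phi v = phi (EuclideanSpace.single (⟨0, hn⟩ : Fin n) (1 : ℝ)) * ENNReal.ofReal ‖v‖ := by
  set u0 : Eu n := EuclideanSpace.single (⟨0, hn⟩ : Fin n) (1 : ℝ) with hu0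
  have hu0n : ‖u0‖ = 1 := by simp [hu0, EuclideanSpace.norm_single]
  by_cases hv : v = 0
  · simp [phi, hv, inner_zero_right]
  · set v0 : Eu n := ‖v‖ • u0 with hv0
    have hnorm : ‖v‖ = ‖v0‖ := by
      rw [hv0, norm_smul, hu0n, mul_one, Real.norm_eq_abs, abs_of_nonneg (norm_nonneg v)]
    set e := Submodule.reflection (Submodule.span ℝ {v - v0})ᗮ with he
    have hev : e v = v0 := Submodule.reflection_sub hnorm
    have hkey : ∀ g : Eu n, ⟪e g, v⟫ = ⟪g, v0⟫ := by
      intro g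
      conv_lhs => rw [← Submodule.reflection_reflection (Submodule.span ℝ {v - v0})ᗮ v]
      rw [← he, LinearIsometryEquiv.inner_map_map, hev]
    calc phi v = ∫⁻ g : Eu n, ENNReal.ofReal |⟪e g, v⟫| * wt (e g) :=
          (e.measurePreserving.lintegral_comp (meas_phi_integrand v)).symm
      _ = ∫⁻ g : Eu n, ENNReal.ofReal |⟪g, v0⟫| * wt g := by
          refine lintegral_congr fun g => ?_
          rw [hkey g]
          simp [wt, e.norm_map]
      _ = ∫⁻ g : Eu n, ENNReal.ofReal ‖v‖ * (ENNReal.ofReal |⟪g, u0⟫| * wt g) := by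
          refine lintegral_congr fun g => ?_
          rw [hv0, real_inner_smul_right, abs_mul, abs_of_nonneg (norm_nonneg v),
            ENNReal.ofReal_mul (norm_nonneg v), mul_assoc]
      _ = ENNReal.ofReal ‖v‖ * phi u0 :=
          lintegral_const_mul' _ _ ofReal_ne_top
      _ = phi u0 * ENNReal.ofReal ‖v‖ := mul_comm _ _

lemma c_pos (hn : 0 < n) :
    0 < phi (EuclideanSpace.single (⟨0, hn⟩ : Fin n) (1 : ℝ)) := by
  set u0 : Eu n := EuclideanSpace.single (⟨0, hn⟩ : Fin n) (1 : ℝ) with hu0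
  have hu0n : ‖u0‖ = 1 := by simp [hu0, EuclideanSpace.norm_single]
  set s : Set (Eu n) := Metric.ball u0 (1/2) with hs
  set ε : ℝ≥0∞ := ENNReal.ofReal ((1/2) * Real.exp (-(9/4))) with hε
  have hlow : ∀ g ∈ s, ε ≤ ENNReal.ofReal |⟪g, u0⟫| * wt g := by
    intro g hg
    have hdist : ‖g - u0‖ < 1/2 := by
      rw [← dist_eq_norm]; exact Metric.mem_ball.mp hg
    have h1 : (1:ℝ)/2 ≤ |⟪g, u0⟫| := by
      have hsplit : ⟪g, u0⟫ = ⟪g - u0, u0⟫ + ⟪u0, u0⟫ := by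
        rw [inner_sub_left]; ring
      have huu : ⟪u0, u0⟫ = (1:ℝ) := by
        have := real_inner_self_eq_norm_sq u0
        rw [hu0n] at this; simpa using this
      have h2 : |⟪g - u0, u0⟫| ≤ ‖g - u0‖ := by
        have := abs_real_inner_le_norm (g - u0) u0
        rwa [hu0n, mul_one] at this
      have : (1:ℝ)/2 ≤ ⟪g, u0⟫ := by
        rw [hsplit, huu]
        have := abs_le.mp h2
        linarith
      exact le_trans this (le_abs_self _)
    have h2 : Real.exp (-(9/4)) ≤ Real.exp (-‖g‖^2) := by
      apply Real.exp_le_exp.mpr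
      have hng : ‖g‖ ≤ 3/2 := by
        have := norm_sub_norm_le g u0
        have h' : ‖g‖ - 1 < 1/2 := by rw [← hu0n]; linarith [hdist, this]
        linarith
      nlinarith [norm_nonneg g]
    rw [hε]
    rw [ENNReal.ofReal_mul (by norm_num)]
    exact mul_le_mul' (ENNReal.ofReal_le_ofReal h1) (ENNReal.ofReal_le_ofReal h2)
  have hεpos : 0 < ε := by
    rw [hε]; apply ENNReal.ofReal_pos.mpr; positivity
  calc (0:ℝ≥0∞) < ε * volume s := by
        apply ENNReal.mul_pos hεpos.ne'
        exact (Metric.measure_ball_pos volume u0 (by norm_num)).ne'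
    _ = ∫⁻ g, s.indicator (fun _ => ε) g := by
        rw [lintegral_indicator_const measurableSet_ball]
    _ ≤ phi u0 := by
        apply lintegral_mono
        intro g
        by_cases hg : g ∈ s
        · simpa [Set.indicator_of_mem hg] using hlow g hg
        · simp [Set.indicator_of_notMem hg]

lemma integrable_exp_half : Integrable (fun g : Eu n => Real.exp (-(2⁻¹) * ‖g‖ ^ 2)) volume := by
  have h := (GaussianFourier.integrable_cexp_neg_mul_sq_norm_add
    (b := (2⁻¹ : ℂ)) (by norm_num) 0 (0 : Eu n)).norm
  convert h using 2 with g
  rw [zero_mul, add_zero]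
  rw [Complex.norm_exp]
  congr 1
  have : -(2⁻¹ : ℂ) * (‖g‖ : ℂ) ^ 2 = ((-(2⁻¹) * ‖g‖ ^ 2 : ℝ) : ℂ) := by push_cast; ring
  rw [this, Complex.ofReal_re]

lemma c_ne_top (hn : 0 < n) :
    phi (EuclideanSpace.single (⟨0, hn⟩ : Fin n) (1 : ℝ)) ≠ ⊤ := by
  set u0 : Eu n := EuclideanSpace.single (⟨0, hn⟩ : Fin n) (1 : ℝ) with hu0
  have hu0n : ‖u0‖ = 1 := by simp [hu0, EuclideanSpace.norm_single]
  have hb : ∀ g : Eu n, ENNReal.ofReal |⟪g, u0⟫| * wt g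
      ≤ ENNReal.ofReal (Real.exp (-(2⁻¹) * ‖g‖ ^ 2)) := by
    intro g
    have h1 : |⟪g, u0⟫| ≤ ‖g‖ := by
      have := abs_real_inner_le_norm g u0
      rwa [hu0n, mul_one] at this
    rw [wt, ← ENNReal.ofReal_mul (abs_nonneg _)]
    apply ENNReal.ofReal_le_ofReal
    have h2 : ‖g‖ ≤ Real.exp (2⁻¹ * ‖g‖ ^ 2) := by
      have h3 := Real.add_one_le_exp (2⁻¹ * ‖g‖ ^ 2)
      nlinarith [norm_nonneg g, sq_nonneg (‖g‖ - 1)]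
    calc |⟪g, u0⟫| * Real.exp (-‖g‖ ^ 2) ≤ ‖g‖ * Real.exp (-‖g‖ ^ 2) := by
          apply mul_le_mul_of_nonneg_right h1 (Real.exp_nonneg _)
      _ ≤ Real.exp (2⁻¹ * ‖g‖ ^ 2) * Real.exp (-‖g‖ ^ 2) := by
          apply mul_le_mul_of_nonneg_right h2 (Real.exp_nonneg _)
      _ = Real.exp (-(2⁻¹) * ‖g‖ ^ 2) := by
          rw [← Real.exp_add]; ring_nf
  have hfin : (∫⁻ g : Eu n, ENNReal.ofReal (Real.exp (-(2⁻¹) * ‖g‖ ^ 2))) < ⊤ := by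
    have h := integrable_exp_half (n := n)
    have := h.hasFiniteIntegral
    rw [hasFiniteIntegral_iff_ofReal] at this
    · exact this
    · exact Filter.Eventually.of_forall fun g => (Real.exp_pos _).le
  exact (lt_of_le_of_lt (lintegral_mono hb) hfin).ne


noncomputable def Dd (ρ σ : Measure (Eu n)) : ℝ≥0∞ :=
  ∫⁻ x, ∫⁻ y, ENNReal.ofReal ‖x - y‖ ∂σ ∂ρ

noncomputable def Kk (g : Eu n) (ρ σ : Measure (Eu n)) : ℝ≥0∞ :=
  ∫⁻ t : ℝ, (ρ {x | ⟪g, x⟫ ≤ t} * σ {y | t < ⟪g, y⟫}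
    + σ {y | ⟪g, y⟫ ≤ t} * ρ {x | t < ⟪g, x⟫})

lemma meas_wt : Measurable fun g : Eu n => wt g :=
  ((continuous_norm.pow 2).neg.rexp.measurable).ennreal_ofReal

lemma meas_joint : Measurable fun p : (Eu n × Eu n) × Eu n =>
    ENNReal.ofReal |⟪p.2, p.1.1⟫ - ⟪p.2, p.1.2⟫| * wt p.2 := by
  refine Measurable.mul (f := fun p : (Eu n × Eu n) × Eu n =>
      ENNReal.ofReal |⟪p.2, p.1.1⟫ - ⟪p.2, p.1.2⟫|) (g := fun p => wt p.2) ?_ ?_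
  · apply Measurable.ennreal_ofReal
    apply Continuous.measurable
    exact ((continuous_snd.inner (continuous_fst.fst)).sub
      (continuous_snd.inner (continuous_fst.snd))).abs
  · exact meas_wt.comp measurable_snd

lemma rep (hn : 0 < n) (ρ σ : Measure (Eu n))
    [IsProbabilityMeasure ρ] [IsProbabilityMeasure σ] :
    phi (EuclideanSpace.single (⟨0, hn⟩ : Fin n) (1 : ℝ)) * Dd ρ σ
      = ∫⁻ g : Eu n, wt g * Kk g ρ σ := by
  set c := phi (EuclideanSpace.single (⟨0, hn⟩ : Fin n) (1 : ℝ)) with hc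
  have hct := c_ne_top hn
  have hmf : Measurable fun z : Eu n × Eu n =>
      ∫⁻ g : Eu n, ENNReal.ofReal |⟪g, z.1⟫ - ⟪g, z.2⟫| * wt g := by
    apply Measurable.lintegral_prod_right'
      (f := fun p : (Eu n × Eu n) × Eu n => ENNReal.ofReal |⟪p.2, p.1.1⟫ - ⟪p.2, p.1.2⟫| * wt p.2)
    exact meas_joint
  calc c * Dd ρ σ
      = ∫⁻ x, c * ∫⁻ y, ENNReal.ofReal ‖x - y‖ ∂σ ∂ρ :=
        (lintegral_const_mul' c _ hct).symm
    _ = ∫⁻ x, ∫⁻ y, c * ENNReal.ofReal ‖x - y‖ ∂σ ∂ρ :=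
        lintegral_congr fun x => (lintegral_const_mul' c _ hct).symm
    _ = ∫⁻ x, ∫⁻ y, (∫⁻ g : Eu n, ENNReal.ofReal |⟪g, x⟫ - ⟪g, y⟫| * wt g) ∂σ ∂ρ := by
        refine lintegral_congr fun x => lintegral_congr fun y => ?_
        rw [← phi_eq hn (x - y)]
        refine lintegral_congr fun g => ?_
        rw [inner_sub_right]
    _ = ∫⁻ z : Eu n × Eu n, (∫⁻ g : Eu n, ENNReal.ofReal |⟪g, z.1⟫ - ⟪g, z.2⟫| * wt g)
          ∂ρ.prod σ := (lintegral_prod _ hmf.aemeasurable).symm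
    _ = ∫⁻ g : Eu n, ∫⁻ z : Eu n × Eu n, ENNReal.ofReal |⟪g, z.1⟫ - ⟪g, z.2⟫| * wt g
          ∂ρ.prod σ := by
        refine lintegral_lintegral_swap ?_
        have huc : Function.uncurry (fun (z : Eu n × Eu n) (g : Eu n) =>
            ENNReal.ofReal |⟪g, z.1⟫ - ⟪g, z.2⟫| * wt g)
            = fun p : (Eu n × Eu n) × Eu n =>
              ENNReal.ofReal |⟪p.2, p.1.1⟫ - ⟪p.2, p.1.2⟫| * wt p.2 := rfl
        rw [huc]
        exact meas_joint.aemeasurable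
    _ = ∫⁻ g : Eu n, wt g * Kk g ρ σ := by
        refine lintegral_congr fun g => ?_
        have hwt : wt g ≠ ⊤ := by simp [wt]
        rw [lintegral_mul_const' (wt g) _ hwt]
        have hmz : Measurable fun z : Eu n × Eu n =>
            ENNReal.ofReal |⟪g, z.1⟫ - ⟪g, z.2⟫| := by
          apply Measurable.ennreal_ofReal
          apply Continuous.measurable
          exact ((continuous_const.inner continuous_fst).sub
            (continuous_const.inner continuous_snd)).abs
        rw [lintegral_prod _ hmz.aemeasurable]
        rw [key2 ρ σ g, mul_comm]
        rfl

lemma pt {p q : ℝ≥0∞} (hp : p ≤ 1) (hq : q ≤ 1) :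
    (p * (1 - p) + p * (1 - p)) + (q * (1 - q) + q * (1 - q))
      ≤ 2 * (p * (1 - q) + q * (1 - p)) := by
  have hp' : p ≠ ⊤ := (lt_of_le_of_lt hp one_lt_top).ne
  have hq' : q ≠ ⊤ := (lt_of_le_of_lt hq one_lt_top).ne
  set a := p.toReal with ha
  set b := q.toReal with hb
  have ha0 : 0 ≤ a := toReal_nonneg
  have hb0 : 0 ≤ b := toReal_nonneg
  have ha1 : a ≤ 1 := by
    rw [ha, ← ENNReal.toReal_one]; exact ENNReal.toReal_mono one_ne_top hp
  have hb1 : b ≤ 1 := by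
    rw [hb, ← ENNReal.toReal_one]; exact ENNReal.toReal_mono one_ne_top hq
  have ha0' : 0 ≤ 1 - a := by linarith
  have hb0' : 0 ≤ 1 - b := by linarith
  have hpa : p = ENNReal.ofReal a := (ENNReal.ofReal_toReal hp').symm
  have hqa : q = ENNReal.ofReal b := (ENNReal.ofReal_toReal hq').symm
  have h1a : (1 : ℝ≥0∞) - ENNReal.ofReal a = ENNReal.ofReal (1 - a) := by
    rw [← ENNReal.ofReal_one, ← ENNReal.ofReal_sub _ ha0]
  have h1b : (1 : ℝ≥0∞) - ENNReal.ofReal b = ENNReal.ofReal (1 - b) := by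
    rw [← ENNReal.ofReal_one, ← ENNReal.ofReal_sub _ hb0]
  have h2 : (2 : ℝ≥0∞) = ENNReal.ofReal 2 := by simp
  rw [hpa, hqa, h1a, h1b, h2, ← ENNReal.ofReal_mul ha0, ← ENNReal.ofReal_mul ha0,
    ← ENNReal.ofReal_mul hb0, ← ENNReal.ofReal_mul hb0,
    ← ENNReal.ofReal_add (mul_nonneg ha0 ha0') (mul_nonneg ha0 ha0'),
    ← ENNReal.ofReal_add (mul_nonneg hb0 hb0') (mul_nonneg hb0 hb0'),
    ← ENNReal.ofReal_add (by positivity) (by positivity),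
    ← ENNReal.ofReal_add (mul_nonneg ha0 hb0') (mul_nonneg hb0 ha0'),
    ← ENNReal.ofReal_mul (by norm_num : (0:ℝ) ≤ 2)]
  exact ENNReal.ofReal_le_ofReal (by nlinarith [sq_nonneg (a - b)])

lemma Kk_ineq (g : Eu n) (μ ν : Measure (Eu n))
    [IsProbabilityMeasure μ] [IsProbabilityMeasure ν] :
    Kk g μ μ + Kk g ν ν ≤ 2 * Kk g μ ν := by
  have mg := meas_inner g
  have compl : ∀ (ρ : Measure (Eu n)), IsProbabilityMeasure ρ → ∀ t : ℝ,
      ρ {x : Eu n | t < ⟪g, x⟫} = 1 - ρ {x : Eu n | ⟪g, x⟫ ≤ t} := by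
    intro ρ hρ t
    have hset : {x : Eu n | t < ⟪g, x⟫} = {x : Eu n | ⟪g, x⟫ ≤ t}ᶜ := by
      ext x; simp [not_le]
    rw [hset, prob_compl_eq_one_sub (measurableSet_le mg measurable_const)]
  calc Kk g μ μ + Kk g ν ν
      ≤ ∫⁻ t : ℝ, ((μ {x | ⟪g, x⟫ ≤ t} * μ {y | t < ⟪g, y⟫}
          + μ {y | ⟪g, y⟫ ≤ t} * μ {x | t < ⟪g, x⟫})
        + (ν {x | ⟪g, x⟫ ≤ t} * ν {y | t < ⟪g, y⟫}
          + ν {y | ⟪g, y⟫ ≤ t} * ν {x | t < ⟪g, x⟫})) := le_lintegral_add _ _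
    _ ≤ ∫⁻ t : ℝ, 2 * (μ {x | ⟪g, x⟫ ≤ t} * ν {y | t < ⟪g, y⟫}
          + ν {y | ⟪g, y⟫ ≤ t} * μ {x | t < ⟪g, x⟫}) := by
        refine lintegral_mono fun t => ?_
        rw [compl μ inferInstance t, compl ν inferInstance t]
        exact pt prob_le_one prob_le_one
    _ = 2 * Kk g μ ν := lintegral_const_mul' 2 _ (by norm_num)

lemma main_ineq (hn : 0 < n) (μ ν : Measure (Eu n))
    [IsProbabilityMeasure μ] [IsProbabilityMeasure ν] :
    Dd μ μ + Dd ν ν ≤ 2 * Dd μ ν := by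
  have hc0 := (c_pos hn).ne'
  have hct := c_ne_top hn
  rw [← ENNReal.mul_le_mul_iff_right hc0 hct]
  calc phi (EuclideanSpace.single (⟨0, hn⟩ : Fin n) (1 : ℝ)) * (Dd μ μ + Dd ν ν)
      = _ * Dd μ μ + _ * Dd ν ν := mul_add _ _ _
    _ = (∫⁻ g : Eu n, wt g * Kk g μ μ) + ∫⁻ g : Eu n, wt g * Kk g ν ν := by
        rw [rep hn μ μ, rep hn ν ν]
    _ ≤ ∫⁻ g : Eu n, (wt g * Kk g μ μ + wt g * Kk g ν ν) := le_lintegral_add _ _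
    _ ≤ ∫⁻ g : Eu n, 2 * (wt g * Kk g μ ν) := by
        refine lintegral_mono fun g => ?_
        calc wt g * Kk g μ μ + wt g * Kk g ν ν
            = wt g * (Kk g μ μ + Kk g ν ν) := (mul_add _ _ _).symm
          _ ≤ wt g * (2 * Kk g μ ν) := mul_le_mul_right (Kk_ineq g μ ν) _
          _ = 2 * (wt g * Kk g μ ν) := by ring
    _ = 2 * ∫⁻ g : Eu n, wt g * Kk g μ ν := lintegral_const_mul' 2 _ (by norm_num)
    _ = 2 * (phi (EuclideanSpace.single (⟨0, hn⟩ : Fin n) (1 : ℝ)) * Dd μ ν) := by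
        rw [rep hn μ ν]
    _ = phi (EuclideanSpace.single (⟨0, hn⟩ : Fin n) (1 : ℝ)) * (2 * Dd μ ν) := by ring

lemma mom_fin (ρ : Measure (Eu n)) (h1 : Integrable (fun x : Eu n => ‖x‖) ρ) :
    ∫⁻ x, ENNReal.ofReal ‖x‖ ∂ρ ≠ ⊤ := by
  have h := h1.hasFiniteIntegral
  rw [hasFiniteIntegral_iff_ofReal
    (Filter.Eventually.of_forall fun x => norm_nonneg _)] at h
  exact h.ne

lemma D_fin (ρ σ : Measure (Eu n)) [IsProbabilityMeasure ρ] [IsProbabilityMeasure σ]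
    (h1 : Integrable (fun x : Eu n => ‖x‖) ρ) (h2 : Integrable (fun x : Eu n => ‖x‖) σ) :
    Dd ρ σ ≠ ⊤ := by
  have hb : Dd ρ σ ≤ (∫⁻ x, ENNReal.ofReal ‖x‖ ∂ρ) + ∫⁻ y, ENNReal.ofReal ‖y‖ ∂σ := by
    calc Dd ρ σ ≤ ∫⁻ x, ∫⁻ y, (ENNReal.ofReal ‖x‖ + ENNReal.ofReal ‖y‖) ∂σ ∂ρ := by
          refine lintegral_mono fun x => lintegral_mono fun y => ?_
          rw [← ENNReal.ofReal_add (norm_nonneg _) (norm_nonneg _)]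
          exact ENNReal.ofReal_le_ofReal (norm_sub_le x y)
      _ = ∫⁻ x, (ENNReal.ofReal ‖x‖ + ∫⁻ y, ENNReal.ofReal ‖y‖ ∂σ) ∂ρ := by
          refine lintegral_congr fun x => ?_
          rw [lintegral_add_left measurable_const, lintegral_const, measure_univ, mul_one]
      _ = (∫⁻ x, ENNReal.ofReal ‖x‖ ∂ρ) + ∫⁻ y, ENNReal.ofReal ‖y‖ ∂σ := by
          rw [lintegral_add_right _ measurable_const, lintegral_const, measure_univ, mul_one]
  exact (lt_of_le_of_lt hb (lt_top_iff_ne_top.mpr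
    (ENNReal.add_ne_top.mpr ⟨mom_fin ρ h1, mom_fin σ h2⟩))).ne

lemma D_toReal (ρ σ : Measure (Eu n)) [IsProbabilityMeasure ρ] [IsProbabilityMeasure σ]
    (hD : Dd ρ σ ≠ ⊤) :
    ∫ x, ∫ y, ‖x - y‖ ∂σ ∂ρ = (Dd ρ σ).toReal := by
  have mnorm : Measurable fun p : Eu n × Eu n => ENNReal.ofReal ‖p.1 - p.2‖ :=
    ((continuous_fst.sub continuous_snd).norm.measurable).ennreal_ofReal
  have hG : Measurable fun x : Eu n => ∫⁻ y, ENNReal.ofReal ‖x - y‖ ∂σ :=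
    Measurable.lintegral_prod_right' mnorm
  have h1 : ∀ x : Eu n, ∫ y, ‖x - y‖ ∂σ = (∫⁻ y, ENNReal.ofReal ‖x - y‖ ∂σ).toReal := by
    intro x
    exact integral_eq_lintegral_of_nonneg_ae
      (Filter.Eventually.of_forall fun y => norm_nonneg _)
      ((continuous_const.sub continuous_id).norm.aestronglyMeasurable)
  simp_rw [h1]
  rw [integral_eq_lintegral_of_nonneg_ae
    (Filter.Eventually.of_forall fun x => toReal_nonneg)
    (hG.ennreal_toReal.aestronglyMeasurable)]
  congr 1
  have hae : ∀ᵐ x ∂ρ, (∫⁻ y, ENNReal.ofReal ‖x - y‖ ∂σ) < ⊤ := ae_lt_top hG hD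
  refine lintegral_congr_ae ?_
  filter_upwards [hae] with x hx
  rw [ENNReal.ofReal_toReal hx.ne]


end EnergyAux

open EnergyAux

/-- Nonnegativity of the energy distance between Borel probability measures on `ℝⁿ`
with finite first moments:
`2 E‖x − y‖ − E‖x − x'‖ − E‖y − y'‖ ≥ 0`. -/
theorem energyDist_nonneg {n : ℕ}
    (μ ν : Measure (EuclideanSpace ℝ (Fin n)))
    (hμ : IsProbabilityMeasure μ) (hν : IsProbabilityMeasure ν)
    (hμ1 : Integrable (fun x => ‖x‖) μ) (hν1 : Integrable (fun x => ‖x‖) ν) :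
    0 ≤ 2 * ∫ x, ∫ y, ‖x - y‖ ∂ν ∂μ
        - ∫ x, ∫ y, ‖x - y‖ ∂μ ∂μ
        - ∫ x, ∫ y, ‖x - y‖ ∂ν ∂ν := by
  rcases Nat.eq_zero_or_pos n with rfl | hn
  · have h0 : ∀ x y : EuclideanSpace ℝ (Fin 0), ‖x - y‖ = 0 := by
      intro x y
      simp [EuclideanSpace.norm_eq]
    simp [h0]
  · have key := main_ineq hn μ ν
    have hDμν : Dd μ ν ≠ ⊤ := D_fin μ ν hμ1 hν1
    have hsum : Dd μ μ + Dd ν ν ≠ ⊤ := by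
      intro h
      rw [h] at key
      exact hDμν (by
        have := top_le_iff.mp key
        rcases ENNReal.mul_eq_top.mp this with ⟨_, h⟩ | ⟨h, _⟩
        · exact h
        · norm_num at h)
    have hDμμ : Dd μ μ ≠ ⊤ := fun h => hsum (by rw [h]; simp)
    have hDνν : Dd ν ν ≠ ⊤ := fun h => hsum (by rw [h]; simp)
    rw [D_toReal μ ν hDμν, D_toReal μ μ hDμμ, D_toReal ν ν hDνν]
    have h2 : (2 * Dd μ ν) ≠ ⊤ :=
      ENNReal.mul_ne_top (by simp) hDμν
    have hle : (Dd μ μ + Dd ν ν).toReal ≤ (2 * Dd μ ν).toReal :=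
      ENNReal.toReal_mono h2 key
    rw [ENNReal.toReal_add hDμμ hDνν, ENNReal.toReal_mul] at hle
    have h2' : (2 : ℝ≥0∞).toReal = 2 := by simp
    rw [h2'] at hle
    linarith
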